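/- arXiv:2507.13679 — 2 statements merged into one kernel-verified Lean document; each statement's English description precedes it below -/
import Mathlib

section
/- For a prime p ≥ 3, two matrices A, B ∈ SL₂(F_p) with equal trace a, where a² − 4 is a non-square in F_p, are conjugate in SL₂(F_p). -/
open Matrix Polynomial

private def companionSL (p : ℕ) [Fact p.Prime] (a : ZMod p) :
    Matrix.SpecialLinearGroup (Fin 2) (ZMod p) :=
  ⟨!![0,-1;1,a], by norm_num [Matrix.det_fin_two_of]⟩

private lemma conj_companion
    (p : ℕ) [Fact p.Prime] (hp : 3 ≤ p) (a : ZMod p)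
    (ha : ¬ ∃ x : ZMod p, x ^ 2 = a ^ 2 - 4)
    (A : Matrix.SpecialLinearGroup (Fin 2) (ZMod p))
    (hA : (A : Matrix (Fin 2) (Fin 2) (ZMod p)).trace = a) :
    IsConj (companionSL p a) A := by
  set α := (A : Matrix (Fin 2) (Fin 2) (ZMod p)) 0 0 with hα
  set β := (A : Matrix (Fin 2) (Fin 2) (ZMod p)) 0 1 with hβ
  set γ := (A : Matrix (Fin 2) (Fin 2) (ZMod p)) 1 0 with hγ
  set δ := (A : Matrix (Fin 2) (Fin 2) (ZMod p)) 1 1 with hδ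
  have hdet : α * δ - β * γ = 1 := by
    have := A.prop
    rwa [Matrix.det_fin_two] at this
  have htr : α + δ = a := by
    rwa [Matrix.trace_fin_two] at hA
  have h2 : (2 : ZMod p) ≠ 0 := by
    intro h
    have h' : ((2 : ℕ) : ZMod p) = 0 := by exact_mod_cast h
    have hd := (ZMod.natCast_eq_zero_iff _ _).mp h'
    have := Nat.le_of_dvd (by norm_num) hd
    omega
  have hD : a ^ 2 - 4 ≠ 0 := fun h => ha ⟨0, by rw [h]; ring⟩
  have hγ0 : γ ≠ 0 := by
    intro h
    exact ha ⟨α - δ, by linear_combination (-4) * hdet + (α + δ + a) * htr - 4*β*h⟩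
  obtain ⟨u, y, huy⟩ : ∃ u y : ZMod p, u ^ 2 - (a^2-4) * y ^ 2 = 4 * γ := by
    have hcard : Fintype.card (ZMod p) % 2 = 1 := by
      rw [ZMod.card]
      exact Nat.odd_iff.mp ((Fact.out : p.Prime).odd_of_ne_two (by omega))
    have hf2 : (X ^ 2 : (ZMod p)[X]).degree = 2 := degree_X_pow 2
    have h1 : (Polynomial.C (-(a^2-4)) * X ^ 2 : (ZMod p)[X]).degree = 2 := by
      rw [Polynomial.degree_C_mul_X_pow 2 (neg_ne_zero.mpr hD)]; norm_cast
    have hg2 : (Polynomial.C (-(a^2-4)) * X ^ 2 + Polynomial.C (-(4*γ)) : (ZMod p)[X]).degree = 2 := by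
      rw [Polynomial.degree_add_eq_left_of_degree_lt, h1]
      rw [h1]
      exact lt_of_le_of_lt (Polynomial.degree_C_le) (by norm_num)
    obtain ⟨u, y, h⟩ := FiniteField.exists_root_sum_quadratic hf2 hg2 hcard
    refine ⟨u, y, ?_⟩
    simp only [eval_add, eval_mul, eval_pow, eval_X, eval_C] at h
    linear_combination h
  have h2γ : (2:ZMod p) * γ ≠ 0 := mul_ne_zero h2 hγ0
  obtain ⟨x, hxγ⟩ : ∃ x : ZMod p, x * (2 * γ) = u - (δ - α) * y :=
    ⟨(u - (δ - α) * y) * ((2:ZMod p) * γ)⁻¹, by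
      rw [mul_assoc, inv_mul_cancel₀ h2γ, mul_one]⟩
  have h4γ : (2:ZMod p) * 2 * γ ≠ 0 := mul_ne_zero (mul_ne_zero h2 h2) hγ0
  have hQ : x * (γ * x + δ * y) - (α * x + β * y) * y = 1 := by
    apply mul_left_cancel₀ h4γ
    linear_combination (2*γ*x + (δ-α)*y + u) * hxγ + huy + y^2 * (4*hdet - (α+δ+a)*htr)
  refine isConj_iff.mpr ⟨⟨!![x, α*x+β*y; y, γ*x+δ*y], by
      rw [Matrix.det_fin_two_of]; linear_combination hQ⟩, ?_⟩
  refine (mul_inv_eq_iff_eq_mul (G := Matrix.SpecialLinearGroup (Fin 2) (ZMod p))).mpr ?_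
  apply Subtype.coe_injective
  show (!![x, α*x+β*y; y, γ*x+δ*y] : Matrix (Fin 2) (Fin 2) (ZMod p)) * !![0,-1;1,a]
      = (A : Matrix (Fin 2) (Fin 2) (ZMod p)) * !![x, α*x+β*y; y, γ*x+δ*y]
  ext i j
  fin_cases i <;> fin_cases j <;>
    simp [Matrix.mul_apply, Fin.sum_univ_two, ← hα, ← hβ, ← hγ, ← hδ]
  · linear_combination x*hdet - (α*x+β*y)*htr
  · linear_combination y*hdet - (γ*x+δ*y)*htr
  
theorem conj_of_trace_eq_nonsquare
    (p : ℕ) [Fact p.Prime] (hp : 3 ≤ p) (a : ZMod p)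
    (ha : ¬ ∃ x : ZMod p, x ^ 2 = a ^ 2 - 4)
    (A B : Matrix.SpecialLinearGroup (Fin 2) (ZMod p))
    (hA : (A : Matrix (Fin 2) (Fin 2) (ZMod p)).trace = a)
    (hB : (B : Matrix (Fin 2) (Fin 2) (ZMod p)).trace = a) :
    IsConj A B := by
  exact (conj_companion p hp a ha A hA).symm.trans (conj_companion p hp a ha B hB)
end

section
/- For a prime p ≥ 3, the conjugacy class in SL₂(F_p) of [[±1, α], [0, ±1]] with α ∈ F_p^× has cardinality (p² − 1)/2. -/
open Matrix

section SLcard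
variable {𝔽 : Type*} [Field 𝔽] [Fintype 𝔽] [DecidableEq 𝔽]

omit [Fintype 𝔽] [DecidableEq 𝔽] in
lemma det_surj : Function.Surjective (Matrix.GeneralLinearGroup.det : GL (Fin 2) 𝔽 →* 𝔽ˣ) := by
  intro u
  refine ⟨Matrix.GeneralLinearGroup.mkOfDetNeZero !![(u:𝔽), 0; 0, 1] ?_, ?_⟩
  · simp [Matrix.det_fin_two_of]
  · ext
    simp [Matrix.GeneralLinearGroup.mkOfDetNeZero, Matrix.GeneralLinearGroup.mk',
      Matrix.GeneralLinearGroup.val_det_apply, Matrix.unitOfDetInvertible,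
      Matrix.det_fin_two_of]

noncomputable def slEquivKer :
    SpecialLinearGroup (Fin 2) 𝔽 ≃
      (Matrix.GeneralLinearGroup.det : GL (Fin 2) 𝔽 →* 𝔽ˣ).ker where
  toFun A := ⟨Matrix.SpecialLinearGroup.toGL A, by simp [MonoidHom.mem_ker]⟩
  invFun g := ⟨(g : GL (Fin 2) 𝔽).val, by
    have := g.2
    rw [MonoidHom.mem_ker] at this
    have := congrArg Units.val this
    simpa [Matrix.GeneralLinearGroup.val_det_apply] using this⟩
  left_inv A := by ext : 2; rfl
  right_inv g := by ext : 3; rfl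

lemma card_SL2_mul : Nat.card (SpecialLinearGroup (Fin 2) 𝔽) * (Fintype.card 𝔽 - 1)
    = Nat.card (GL (Fin 2) 𝔽) := by
  rw [Nat.card_congr (slEquivKer (𝔽 := 𝔽)),
    Subgroup.card_eq_card_quotient_mul_card_subgroup
      (Matrix.GeneralLinearGroup.det : GL (Fin 2) 𝔽 →* 𝔽ˣ).ker,
    Nat.card_congr (QuotientGroup.quotientKerEquivOfSurjective _ det_surj).toEquiv,
    mul_comm]
  congr 1
  rw [Nat.card_eq_fintype_card, Fintype.card_units]

lemma card_SL2 : Nat.card (SpecialLinearGroup (Fin 2) 𝔽)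
    = Fintype.card 𝔽 ^ 3 - Fintype.card 𝔽 := by
  have h2 : 2 ≤ Fintype.card 𝔽 := Fintype.one_lt_card
  set q := Fintype.card 𝔽 with hq
  have key := card_SL2_mul (𝔽 := 𝔽)
  rw [Matrix.card_GL_field, Fin.prod_univ_two] at key
  refine Nat.eq_of_mul_eq_mul_right (show 0 < q - 1 by omega) ?_
  rw [key, ← hq]
  norm_num [Fin.val_zero, Fin.val_one]
  have hq2 : q ≤ q ^ 2 := by nlinarith
  have hq3 : q ≤ q ^ 3 := by nlinarith
  have h1 : 1 ≤ q ^ 2 := by nlinarith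
  zify [hq2, hq3, h1, show 1 ≤ q by omega]
  ring

end SLcard

section Stab

variable (p : ℕ) [Fact p.Prime]

abbrev G2 := SpecialLinearGroup (Fin 2) (ZMod p)

lemma mem_stab_iff (hp : 3 ≤ p) (ε : ZMod p) (α : (ZMod p)ˣ)
    (A : G2 p) (hA : (A : Matrix (Fin 2) (Fin 2) (ZMod p)) = !![ε, (α : ZMod p); 0, ε])
    (g : ConjAct (G2 p)) :
    g ∈ MulAction.stabilizer (ConjAct (G2 p)) A ↔
      ((ConjAct.ofConjAct g : G2 p) : Matrix (Fin 2) (Fin 2) (ZMod p)) 1 0 = 0 ∧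
      ((ConjAct.ofConjAct g : G2 p) : Matrix (Fin 2) (Fin 2) (ZMod p)) 1 1 =
        ((ConjAct.ofConjAct g : G2 p) : Matrix (Fin 2) (Fin 2) (ZMod p)) 0 0 := by
  set B := (ConjAct.ofConjAct g : G2 p)
  set N : Matrix (Fin 2) (Fin 2) (ZMod p) := (B : Matrix (Fin 2) (Fin 2) (ZMod p)) with hN
  have h1 : g ∈ MulAction.stabilizer (ConjAct (G2 p)) A ↔ B * A = A * B := by
    rw [MulAction.mem_stabilizer_iff, ConjAct.smul_def, mul_inv_eq_iff_eq_mul]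
  rw [h1, show B * A = A * B ↔ ((B * A : G2 p) : Matrix (Fin 2) (Fin 2) (ZMod p)) =
    ((A * B : G2 p) : Matrix (Fin 2) (Fin 2) (ZMod p)) from Subtype.ext_iff]
  simp only [Matrix.SpecialLinearGroup.coe_mul, hA]
  constructor
  · intro h
    have h00 := congrFun (congrFun h 0) 0
    have h01 := congrFun (congrFun h 0) 1
    simp [Matrix.mul_apply, Fin.sum_univ_two] at h00 h01
    constructor
    · have : (α : ZMod p) * N 1 0 = 0 := by linear_combination -h00
      rcases mul_eq_zero.1 this with h | h
      · exact absurd h α.ne_zero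
      · exact h
    · have : (α : ZMod p) * (N 1 1 - N 0 0) = 0 := by linear_combination -h01
      rcases mul_eq_zero.1 this with h | h
      · exact absurd h α.ne_zero
      · exact sub_eq_zero.1 h
  · rintro ⟨hc, hd⟩
    ext i j
    fin_cases i <;> fin_cases j <;>
      · simp only [Matrix.mul_apply, Fin.sum_univ_two]
        rw [← hN] at *
        simp [hc, hd, mul_comm, add_comm]

end Stab

section Stab2
variable (p : ℕ) [Fact p.Prime]

def sgn (s : Bool) : ZMod p := if s then 1 else -1

lemma sgn_sq (s : Bool) : sgn p s * sgn p s = 1 := by cases s <;> simp [sgn]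

lemma card_stab (hp : 3 ≤ p) (ε : ZMod p) (α : (ZMod p)ˣ)
    (A : G2 p) (hA : (A : Matrix (Fin 2) (Fin 2) (ZMod p)) = !![ε, (α : ZMod p); 0, ε]) :
    Nat.card (MulAction.stabilizer (ConjAct (G2 p)) A) = 2 * p := by
  haveI : Fact (2 < p) := ⟨by omega⟩
  have e : Bool × ZMod p ≃ MulAction.stabilizer (ConjAct (G2 p)) A := by
    refine
      { toFun := fun sb => ⟨ConjAct.toConjAct
          (⟨!![sgn p sb.1, sb.2; 0, sgn p sb.1], by
            simp [Matrix.det_fin_two_of, sgn_sq]⟩ : G2 p), ?_⟩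
        invFun := fun g =>
          (decide (((ConjAct.ofConjAct (g : ConjAct (G2 p)) : G2 p) :
              Matrix (Fin 2) (Fin 2) (ZMod p)) 0 0 = 1),
           ((ConjAct.ofConjAct (g : ConjAct (G2 p)) : G2 p) :
              Matrix (Fin 2) (Fin 2) (ZMod p)) 0 1)
        left_inv := ?_
        right_inv := ?_ }
    · rw [mem_stab_iff p hp ε α A hA]
      exact ⟨rfl, rfl⟩
    · rintro ⟨s, b⟩
      cases s <;> simp [sgn, ZMod.neg_one_ne_one] <;> erw [ConjAct.ofConjAct_toConjAct] <;>
        simp [ZMod.neg_one_ne_one]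
    · rintro ⟨g, hg⟩
      rw [mem_stab_iff p hp ε α A hA] at hg
      obtain ⟨hc, hd⟩ := hg
      set N : Matrix (Fin 2) (Fin 2) (ZMod p) :=
        ((ConjAct.ofConjAct g : G2 p) : Matrix (Fin 2) (Fin 2) (ZMod p)) with hN
      have hdet : N 0 0 * N 0 0 = 1 := by
        have := (ConjAct.ofConjAct g : G2 p).prop
        rw [Matrix.det_fin_two] at this
        rw [← hN] at this
        rw [← this, hc, hd]; ring
      have ha : N 0 0 = 1 ∨ N 0 0 = -1 := mul_self_eq_one_iff.1 hdet
      ext : 1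
      simp only
      apply ConjAct.ofConjAct.injective
      erw [ConjAct.ofConjAct_toConjAct]
      ext i j
      fin_cases i <;> fin_cases j
      · show sgn p (decide (N 0 0 = 1)) = N 0 0
        rcases ha with h | h <;> simp [h, sgn, ZMod.neg_one_ne_one]
      · rfl
      · exact hc.symm
      · show sgn p (decide (N 0 0 = 1)) = N 1 1
        rw [hd]
        rcases ha with h | h <;> simp [h, sgn, ZMod.neg_one_ne_one]
  rw [← Nat.card_congr e, Nat.card_prod, Nat.card_eq_fintype_card,
    Nat.card_eq_fintype_card, ZMod.card]
  norm_num

end Stab2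

theorem conj_class_card_nonsemisimple
    (p : ℕ) [Fact p.Prime] (hp : 3 ≤ p)
    (ε : ZMod p) (hε : ε = 1 ∨ ε = -1) (α : (ZMod p)ˣ)
    (A : Matrix.SpecialLinearGroup (Fin 2) (ZMod p))
    (hA : (A : Matrix (Fin 2) (Fin 2) (ZMod p)) = !![ε, (α : ZMod p); 0, ε]) :
    Nat.card {B : Matrix.SpecialLinearGroup (Fin 2) (ZMod p) // IsConj A B}
      = (p ^ 2 - 1) / 2 := by
  classical
  haveI : NeZero p := ⟨by omega⟩
  haveI : Fintype (ConjAct (G2 p)) := Fintype.ofEquiv _ ConjAct.toConjAct.toEquiv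
  have e1 : {B : G2 p // IsConj A B} ≃ MulAction.orbit (ConjAct (G2 p)) A :=
    Equiv.subtypeEquivRight fun B => isConj_comm.trans ConjAct.mem_orbit_conjAct.symm
  have key := MulAction.card_orbit_mul_card_stabilizer_eq_card_group (ConjAct (G2 p)) A
  have hG : Fintype.card (ConjAct (G2 p)) = p ^ 3 - p := by
    rw [← Nat.card_eq_fintype_card, Nat.card_congr ConjAct.ofConjAct.toEquiv, card_SL2,
      ZMod.card]
  have hS : Fintype.card (MulAction.stabilizer (ConjAct (G2 p)) A) = 2 * p := by
    rw [← Nat.card_eq_fintype_card, card_stab p hp ε α A hA]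
  rw [hG, hS] at key
  rw [Nat.card_congr e1, Nat.card_eq_fintype_card]
  set n := Fintype.card (MulAction.orbit (ConjAct (G2 p)) A)
  obtain ⟨k, hk⟩ := (Fact.out (p := p.Prime)).odd_of_ne_two (by omega)
  have hp2 : p ^ 2 = 4 * k ^ 2 + 4 * k + 1 := by rw [hk]; ring
  have h1 : p ≤ p ^ 3 := Nat.le_self_pow (by norm_num) p
  have heq : p ^ 3 - p = (2 * k ^ 2 + 2 * k) * (2 * p) := by
    zify [h1]
    rw [hk]
    push_cast
    ring
  have hg : (p ^ 2 - 1) / 2 = 2 * k ^ 2 + 2 * k := by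
    rw [hp2]
    refine Nat.div_eq_of_eq_mul_left (by norm_num) ?_
    simp only [Nat.add_sub_cancel]
    ring
  rw [hg]
  refine Nat.eq_of_mul_eq_mul_right (show 0 < 2 * p by omega) ?_
  rw [key, heq]
end
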